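/- Failure of Hartogs extension: let X ⊂ ℂ⁴ be the closure of the image of the map ℂ² → ℂ⁴, (s,t) ↦ (s⁴, s³t, st³, t⁴). The function given on X minus the origin locally by b²/a, ac/b, bd/c, c²/d (these agree on overlaps and every nonzero point of X has a neighborhood where one of them is defined) is a regular function on X ∖ {0} that does not extend to a regular function on X. -/

import Mathlib

open MvPolynomial

/-- The affine surface `X ⊂ ℂ⁴` parametrized by `(s,t) ↦ (s⁴, s³t, st³, t⁴)`
(its image is Zariski closed, so it equals its closure). -/
def monomialSurface : Set (Fin 4 → ℂ) :=
  {x | ∃ s t : ℂ, x = ![s ^ 4, s ^ 3 * t, s * t ^ 3, t ^ 4]}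

/-- The patched function: `b²/a` where `a ≠ 0`, `c²/d` where `a = 0`. -/
noncomputable def hartogsF : (Fin 4 → ℂ) → ℂ :=
  fun x => if x 0 = 0 then (x 2) ^ 2 / x 3 else (x 1) ^ 2 / x 0

lemma hartogsF_value (s t : ℂ) (h : s ≠ 0 ∨ t ≠ 0) :
    hartogsF ![s ^ 4, s ^ 3 * t, s * t ^ 3, t ^ 4] = s ^ 2 * t ^ 2 := by
  unfold hartogsF
  by_cases hs : s = 0
  · subst hs
    simp
  · have h0 : (![s ^ 4, s ^ 3 * t, s * t ^ 3, t ^ 4] : Fin 4 → ℂ) 0 = s ^ 4 := by simp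
    rw [if_neg (by simp [h0, pow_eq_zero_iff, hs])]
    simp only [Matrix.cons_val_zero, Matrix.cons_val_one, Matrix.head_cons]
    field_simp

lemma surface_pt_ne_zero (s t : ℂ) (h : s ≠ 0 ∨ t ≠ 0) :
    (![s ^ 4, s ^ 3 * t, s * t ^ 3, t ^ 4] : Fin 4 → ℂ) ≠ 0 := by
  intro hx
  have h0 : s ^ 4 = 0 := by simpa using congrFun hx 0
  have h3 : t ^ 4 = 0 := by simpa using congrFun hx 3
  rcases h with hs | ht
  · exact hs (by simpa [pow_eq_zero_iff] using h0)
  · exact ht (by simpa [pow_eq_zero_iff] using h3)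

lemma eval_r (P : MvPolynomial (Fin 4) ℂ) (x : Fin 4 → ℂ) (v : ℂ) :
    Polynomial.eval v
        (eval₂ Polynomial.C (fun i => Polynomial.C (x i) * Polynomial.X) P) =
      eval (fun i => x i * v) P := by
  have h := eval₂_comp_left (Polynomial.evalRingHom v) Polynomial.C
      (fun i => Polynomial.C (x i) * Polynomial.X) P
  have hc : (Polynomial.evalRingHom v).comp Polynomial.C = RingHom.id ℂ := by
    ext a; simp
  rw [hc] at h
  simp only [Function.comp, map_mul, Polynomial.eval_C, Polynomial.eval_X,
    Polynomial.coe_evalRingHom] at h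
  rw [h, show (Polynomial.eval v ∘ fun i => Polynomial.C (x i) * Polynomial.X)
      = fun i => x i * v from funext fun i => by simp]
  rfl

lemma coeff_one_r (P : MvPolynomial (Fin 4) ℂ) (x : Fin 4 → ℂ) :
    (eval₂ Polynomial.C (fun i => Polynomial.C (x i) * Polynomial.X) P).coeff 1 =
      ∑ i : Fin 4, P.coeff (Finsupp.single i 1) * x i := by
  induction P using MvPolynomial.induction_on' with
  | add p q hp hq =>
    simp only [eval₂_add, Polynomial.coeff_add, hp, hq, MvPolynomial.coeff_add, add_mul,
      Finset.sum_add_distrib]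
  | monomial m a =>
    rw [eval₂_monomial]
    have hprod : (m.prod fun i e => (Polynomial.C (x i) * Polynomial.X) ^ e)
        = Polynomial.C (∏ i : Fin 4, x i ^ m i) * Polynomial.X ^ (∑ i : Fin 4, m i) := by
      rw [Finsupp.prod_pow]
      simp only [mul_pow, ← Polynomial.C_pow]
      rw [Finset.prod_mul_distrib, ← map_prod, Finset.prod_pow_eq_pow_sum]
    rw [hprod, ← mul_assoc, ← Polynomial.C_mul, Polynomial.coeff_C_mul,
      Polynomial.coeff_X_pow]
    by_cases hm : (∑ i : Fin 4, m i) = 1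
    · rw [if_pos hm.symm, mul_one]
      have h4 : m 0 + m 1 + m 2 + m 3 = 1 := by rw [← Fin.sum_univ_four]; exact hm
      obtain ⟨j, hj⟩ : ∃ j : Fin 4, m = Finsupp.single j 1 := by
        have hcase : (m 0 = 1 ∧ m 1 = 0 ∧ m 2 = 0 ∧ m 3 = 0) ∨
            (m 0 = 0 ∧ m 1 = 1 ∧ m 2 = 0 ∧ m 3 = 0) ∨
            (m 0 = 0 ∧ m 1 = 0 ∧ m 2 = 1 ∧ m 3 = 0) ∨
            (m 0 = 0 ∧ m 1 = 0 ∧ m 2 = 0 ∧ m 3 = 1) := by omega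
        rcases hcase with h|h|h|h
        · exact ⟨0, by ext i; fin_cases i <;>
            simp [Finsupp.single_apply, h.1, h.2.1, h.2.2.1, h.2.2.2]⟩
        · exact ⟨1, by ext i; fin_cases i <;>
            simp [Finsupp.single_apply, h.1, h.2.1, h.2.2.1, h.2.2.2]⟩
        · exact ⟨2, by ext i; fin_cases i <;>
            simp [Finsupp.single_apply, h.1, h.2.1, h.2.2.1, h.2.2.2]⟩
        · exact ⟨3, by ext i; fin_cases i <;>
            simp [Finsupp.single_apply, h.1, h.2.1, h.2.2.1, h.2.2.2]⟩
      subst hj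
      have hL : (∏ i : Fin 4, x i ^ (Finsupp.single j 1) i) = x j := by
        simp [Finsupp.single_apply, pow_ite]
      have hsingle : ∀ i : Fin 4, (Finsupp.single j 1 = Finsupp.single i 1) ↔ j = i :=
        fun i => Finsupp.single_left_inj (one_ne_zero)
      rw [hL]
      have : ∀ i : Fin 4, coeff (Finsupp.single i 1) ((monomial (Finsupp.single j 1)) a) * x i
          = if j = i then a * x i else 0 := by
        intro i
        rw [MvPolynomial.coeff_monomial, if_congr (hsingle i) rfl rfl, ite_mul, zero_mul]
      rw [Finset.sum_congr rfl fun i _ => this i, Finset.sum_ite_eq]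
      simp
    · rw [if_neg (fun h => hm h.symm), mul_zero]
      symm
      refine Finset.sum_eq_zero fun i _ => ?_
      rw [MvPolynomial.coeff_monomial, if_neg, zero_mul]
      intro h
      subst h
      exact hm (by simp [Finsupp.single_apply])

theorem stmt_9 :
    ∃ f : (Fin 4 → ℂ) → ℂ,
      (∀ x ∈ monomialSurface, x ≠ 0 →
        (x 0 ≠ 0 → f x = (x 1) ^ 2 / x 0) ∧
        (x 1 ≠ 0 → f x = x 0 * x 2 / x 1) ∧
        (x 2 ≠ 0 → f x = x 1 * x 3 / x 2) ∧
        (x 3 ≠ 0 → f x = (x 2) ^ 2 / x 3)) ∧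
      ¬ ∃ P : MvPolynomial (Fin 4) ℂ,
          ∀ x ∈ monomialSurface, x ≠ 0 → f x = eval x P := by
  refine ⟨hartogsF, ?_, ?_⟩
  · rintro x ⟨s, t, rfl⟩ hx
    have hst : s ≠ 0 ∨ t ≠ 0 := by
      by_contra hc
      push_neg at hc
      obtain ⟨hs, ht⟩ := hc
      subst hs; subst ht
      exact hx (by funext i; fin_cases i <;> simp)
    have hf := hartogsF_value s t hst
    have e0 : (![s ^ 4, s ^ 3 * t, s * t ^ 3, t ^ 4] : Fin 4 → ℂ) 0 = s ^ 4 := by simp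
    have e1 : (![s ^ 4, s ^ 3 * t, s * t ^ 3, t ^ 4] : Fin 4 → ℂ) 1 = s ^ 3 * t := by simp
    have e2 : (![s ^ 4, s ^ 3 * t, s * t ^ 3, t ^ 4] : Fin 4 → ℂ) 2 = s * t ^ 3 := by simp
    have e3 : (![s ^ 4, s ^ 3 * t, s * t ^ 3, t ^ 4] : Fin 4 → ℂ) 3 = t ^ 4 := by simp
    simp only [e0, e1, e2, e3, hf]
    refine ⟨fun h => ?_, fun h => ?_, fun h => ?_, fun h => ?_⟩
    · have hs : s ≠ 0 := fun h' => h (by simp [h'])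
      field_simp
    · have hs : s ≠ 0 := fun h' => h (by simp [h'])
      have ht : t ≠ 0 := fun h' => h (by simp [h'])
      field_simp
    · have hs : s ≠ 0 := fun h' => h (by simp [h'])
      have ht : t ≠ 0 := fun h' => h (by simp [h'])
      field_simp
    · have ht : t ≠ 0 := fun h' => h (by simp [h'])
      field_simp
  · rintro ⟨P, hP⟩
    -- the basic identity
    have hE : ∀ s t : ℂ, (s ≠ 0 ∨ t ≠ 0) →
        eval ![s ^ 4, s ^ 3 * t, s * t ^ 3, t ^ 4] P = s ^ 2 * t ^ 2 := by
      intro s t hst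
      rw [← hP _ ⟨s, t, rfl⟩ (surface_pt_ne_zero s t hst)]
      exact hartogsF_value s t hst
    -- the degree-one part identity
    have key : ∀ s t : ℂ, (s ≠ 0 ∨ t ≠ 0) →
        ∑ i : Fin 4, P.coeff (Finsupp.single i 1) *
          (![s ^ 4, s ^ 3 * t, s * t ^ 3, t ^ 4] : Fin 4 → ℂ) i = s ^ 2 * t ^ 2 := by
      intro s t hst
      set x : Fin 4 → ℂ := ![s ^ 4, s ^ 3 * t, s * t ^ 3, t ^ 4] with hxdef
      set r : Polynomial ℂ :=
        eval₂ Polynomial.C (fun i => Polynomial.C (x i) * Polynomial.X) P with hrdef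
      have hval : ∀ v : ℂ, v ≠ 0 → r.eval v = v * (s ^ 2 * t ^ 2) := by
        intro v hv
        obtain ⟨lam, hlam⟩ := IsAlgClosed.exists_pow_nat_eq v (n := 4) (by norm_num)
        have hlam0 : lam ≠ 0 := by
          intro h; apply hv; rw [← hlam, h]; ring
        have hxv : (fun i => x i * v) =
            ![(lam * s) ^ 4, (lam * s) ^ 3 * (lam * t), (lam * s) * (lam * t) ^ 3,
              (lam * t) ^ 4] := by
          funext i
          fin_cases i <;> simp [hxdef, ← hlam] <;> ring
        rw [hrdef, eval_r, hxv, hE (lam * s) (lam * t)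
          (hst.imp (fun h => mul_ne_zero hlam0 h) (fun h => mul_ne_zero hlam0 h)), ← hlam]
        ring
      have hr : r = Polynomial.C (s ^ 2 * t ^ 2) * Polynomial.X := by
        apply Polynomial.eq_of_infinite_eval_eq
        apply Set.Infinite.mono (s := ({0}ᶜ : Set ℂ))
        · intro v hv
          have hv0 : v ≠ 0 := hv
          simp only [Set.mem_setOf_eq, Polynomial.eval_mul, Polynomial.eval_C,
            Polynomial.eval_X, hval v hv0]
          ring
        · exact (Set.finite_singleton 0).infinite_compl
      have := coeff_one_r P x
      rw [← hrdef, hr, Polynomial.coeff_C_mul, Polynomial.coeff_X_one, mul_one] at this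
      exact this.symm
    have k1 := key 1 1 (Or.inl one_ne_zero)
    have k2 := key 1 (-1) (Or.inl one_ne_zero)
    have k3 := key 1 Complex.I (Or.inl one_ne_zero)
    have k4 := key 1 (-Complex.I) (Or.inl one_ne_zero)
    rw [Fin.sum_univ_four] at k1 k2 k3 k4
    simp only [Matrix.cons_val_zero, Matrix.cons_val_one, Matrix.head_cons,
      Matrix.cons_val_two, Matrix.tail_cons, Matrix.cons_val_three, Matrix.cons_val_fin_one,
      one_pow, one_mul, mul_one] at k1 k2 k3 k4
    have hI2 : Complex.I ^ 2 = -1 := Complex.I_sq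
    have : (4 : ℂ) = 0 := by
      linear_combination -k1 - k2 + k3 + k4 +
        (2 + 2 * P.coeff (Finsupp.single 3 1) * (1 - Complex.I ^ 2)) * hI2
    norm_num at this
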